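/- Let N ≥ 2 and let w : Fin N → ℝ be positive weights, and let i₀, i₁ ∈ Fin N be two distinct indices of minimal weight (w(i₀) and w(i₁) are the two smallest values among the w(i)). Then among all depth assignments d : Fin N → ℕ satisfying the Kraft inequality ∑_i 2^{−d(i)} ≤ 1, there exists one minimizing the weighted path length ∑_i w(i)·d(i) in which d(i₀) = d(i₁) and this common value equals the maximum of d over all indices. (This is the exchange lemma underlying the optimality of Huffman's greedy strategy of always merging the two smallest distributions.) -/

import Mathlib

private lemma kraft_mul {N : ℕ} (d : Fin N → ℕ) (D : ℕ) (hD : ∀ i, d i ≤ D) :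
    (∑ i : Fin N, (2:ℝ) ^ (-(d i : ℤ))) * 2 ^ D
      = ((∑ i : Fin N, 2 ^ (D - d i) : ℕ) : ℝ) := by
  push_cast
  rw [Finset.sum_mul]
  refine Finset.sum_congr rfl fun i _ => ?_
  have h1 : (2:ℝ) ^ (-(d i : ℤ)) * 2 ^ D = (2:ℝ) ^ ((D : ℤ) - d i) := by
    rw [← zpow_natCast (2:ℝ) D, ← zpow_add₀ (two_ne_zero)]
    ring_nf
  have h2 : ((D - d i : ℕ) : ℤ) = (D : ℤ) - d i := by
    have := hD i; omega
  rw [h1, ← h2, zpow_natCast]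

private lemma kraft_iff {N : ℕ} (d : Fin N → ℕ) (D : ℕ) (hD : ∀ i, d i ≤ D) :
    ((∑ i : Fin N, (2:ℝ) ^ (-(d i : ℤ))) ≤ 1) ↔ (∑ i : Fin N, 2 ^ (D - d i)) ≤ 2 ^ D := by
  have hpos : (0:ℝ) < 2 ^ D := by positivity
  have hm := kraft_mul d D hD
  constructor
  · intro h
    have h2 : (∑ i : Fin N, (2:ℝ) ^ (-(d i : ℤ))) * 2 ^ D ≤ 1 * 2 ^ D :=
      mul_le_mul_of_nonneg_right h (le_of_lt hpos)
    rw [hm, one_mul] at h2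
    have h3 : ((∑ i : Fin N, 2 ^ (D - d i) : ℕ) : ℝ) ≤ ((2 ^ D : ℕ) : ℝ) := by
      rw [Nat.cast_pow]; exact_mod_cast h2
    exact_mod_cast h3
  · intro h
    have h' : ((∑ i : Fin N, 2 ^ (D - d i) : ℕ) : ℝ) ≤ ((2 ^ D : ℕ) : ℝ) := by exact_mod_cast h
    rw [← hm, Nat.cast_pow, Nat.cast_ofNat] at h'
    have := mul_le_mul_of_nonneg_right (le_of_eq (rfl : (1:ℝ)*2^D = 1*2^D)) (le_of_lt hpos)
    nlinarith

private lemma swap_cost {N : ℕ} (w : Fin N → ℝ) (d : Fin N → ℕ) (a b : Fin N)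
    (hw : w a ≤ w b) (hd : d a ≤ d b) :
    (∑ i : Fin N, w i * ((d (Equiv.swap a b i)) : ℝ)) ≤ ∑ i : Fin N, w i * (d i : ℝ) := by
  by_cases hab : a = b
  · subst hab; simp
  · have hzero : ∀ i ∈ Finset.univ, i ∉ ({a, b} : Finset (Fin N)) →
        w i * ((d (Equiv.swap a b i)) : ℝ) - w i * d i = 0 := by
      intro i _ hi
      simp only [Finset.mem_insert, Finset.mem_singleton, not_or] at hi
      rw [Equiv.swap_apply_of_ne_of_ne hi.1 hi.2]
      ring
    have key : ∑ i : Fin N, (w i * ((d (Equiv.swap a b i)) : ℝ) - w i * d i)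
        = (w a * d b - w a * d a) + (w b * d a - w b * d b) := by
      rw [← Finset.sum_subset (Finset.subset_univ ({a, b} : Finset (Fin N))) hzero,
        Finset.sum_pair hab]
      simp [Equiv.swap_apply_left, Equiv.swap_apply_right]
    have hdd : (d a : ℝ) ≤ d b := by exact_mod_cast hd
    have hsum : ∑ i : Fin N, (w i * ((d (Equiv.swap a b i)) : ℝ) - w i * d i) ≤ 0 := by
      rw [key]; nlinarith
    rw [Finset.sum_sub_distrib] at hsum
    linarith

private lemma exists_optimal {N : ℕ} (hN : 2 ≤ N) (w : Fin N → ℝ) (hw : ∀ i, 0 < w i) :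
    ∃ d : Fin N → ℕ,
      (∑ i : Fin N, (2:ℝ) ^ (-(d i : ℤ))) ≤ 1 ∧
      ∀ d' : Fin N → ℕ, (∑ i : Fin N, (2:ℝ) ^ (-(d' i : ℤ))) ≤ 1 →
        (∑ i : Fin N, w i * (d i : ℝ)) ≤ ∑ i : Fin N, w i * (d' i : ℝ) := by
  classical
  have hN0 : 0 < N := by omega
  set c : ℝ := N * ∑ i : Fin N, w i with hc
  obtain ⟨im, _, him⟩ := Finset.exists_min_image Finset.univ w ⟨⟨0, hN0⟩, Finset.mem_univ _⟩
  have hε : 0 < w im := hw im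
  set M : ℕ := N + Nat.ceil (c / w im) with hM
  have hNM : N ≤ M := Nat.le_add_right _ _
  -- baseline
  have hbase : (∑ i : Fin N, (2:ℝ) ^ (-((N:ℕ) : ℤ))) ≤ 1 := by
    rw [Finset.sum_const, Finset.card_univ, Fintype.card_fin, nsmul_eq_mul]
    have h2 : (N : ℝ) ≤ 2 ^ N := by exact_mod_cast (Nat.lt_two_pow_self (n := N)).le
    rw [zpow_neg, zpow_natCast]
    rw [← mul_inv_cancel₀ (a := (2:ℝ)^N) (by positivity)]
    exact mul_le_mul_of_nonneg_right h2 (by positivity)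
  set F : Finset (Fin N → ℕ) :=
    ((Finset.univ : Finset (Fin N → Fin (M+1))).image (fun f i => (f i : ℕ))).filter
      (fun d => ∑ i : Fin N, (2:ℝ) ^ (-(d i : ℤ)) ≤ 1) with hF
  have hd₀F : (fun _ : Fin N => N) ∈ F := by
    rw [hF, Finset.mem_filter]
    refine ⟨Finset.mem_image.mpr ⟨fun _ => ⟨N, by omega⟩, Finset.mem_univ _, rfl⟩, ?_⟩
    exact hbase
  obtain ⟨d, hdF, hdmin⟩ := Finset.exists_min_image F (fun d => ∑ i : Fin N, w i * (d i : ℝ))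
    ⟨_, hd₀F⟩
  have hdK : (∑ i : Fin N, (2:ℝ) ^ (-(d i : ℤ))) ≤ 1 := (Finset.mem_filter.mp hdF).2
  have hdc : (∑ i : Fin N, w i * (d i : ℝ)) ≤ c := by
    have := hdmin _ hd₀F
    simpa [hc, Finset.sum_mul, mul_comm] using this
  refine ⟨d, hdK, fun d' hK' => ?_⟩
  by_cases hb : ∀ i, d' i ≤ M
  · have : d' ∈ F := by
      rw [hF, Finset.mem_filter]
      refine ⟨Finset.mem_image.mpr ⟨fun i => ⟨d' i, by have := hb i; omega⟩,
        Finset.mem_univ _, rfl⟩, hK'⟩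
    exact hdmin _ this
  · push_neg at hb
    obtain ⟨i, hi⟩ := hb
    have h1 : w im * ((M:ℝ) + 1) ≤ w i * (d' i : ℝ) := by
      have hwi : w im ≤ w i := him i (Finset.mem_univ i)
      have hdi : (M:ℝ) + 1 ≤ (d' i : ℝ) := by exact_mod_cast hi
      have := mul_le_mul hwi hdi (by positivity) (le_of_lt (hw i))
      linarith
    have h2 : c < w im * ((M:ℝ) + 1) := by
      have : c / w im ≤ (M : ℝ) := by
        rw [hM]; push_cast
        have := Nat.le_ceil (c / w im)
        have h3 : (0:ℝ) ≤ N := by positivity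
        linarith
      have := (div_le_iff₀ hε).mp this
      nlinarith
    have h3 : w i * (d' i : ℝ) ≤ ∑ j : Fin N, w j * (d' j : ℝ) := by
      apply Finset.single_le_sum (f := fun j => w j * (d' j : ℝ))
        (fun j _ => mul_nonneg (le_of_lt (hw j)) (Nat.cast_nonneg _)) (Finset.mem_univ i)
    linarith

private lemma two_at_max {N : ℕ} (hN : 2 ≤ N) (w : Fin N → ℝ) (hw : ∀ i, 0 < w i)
    (d : Fin N → ℕ)
    (hdK : (∑ i : Fin N, (2:ℝ) ^ (-(d i : ℤ))) ≤ 1)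
    (hdopt : ∀ d' : Fin N → ℕ, (∑ i : Fin N, (2:ℝ) ^ (-(d' i : ℤ))) ≤ 1 →
        (∑ i : Fin N, w i * (d i : ℝ)) ≤ ∑ i : Fin N, w i * (d' i : ℝ))
    (D : ℕ) (hD : ∀ i, d i ≤ D) (jm : Fin N) (hjm : d jm = D) :
    ∃ j₀ j₁ : Fin N, j₀ ≠ j₁ ∧ d j₀ = D ∧ d j₁ = D := by
  classical
  have hN0 : 0 < N := by omega
  -- D ≥ 1
  have hD1 : 1 ≤ D := by
    by_contra h
    have hD0 : D = 0 := by omega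
    have : ∀ i, d i = 0 := fun i => by have := hD i; omega
    have : (∑ i : Fin N, (2:ℝ) ^ (-(d i : ℤ))) = N := by
      simp [this]
    rw [this] at hdK
    have : (N:ℝ) ≥ 2 := by exact_mod_cast hN
    linarith
  by_contra h
  push_neg at h
  have huniq : ∀ i, i ≠ jm → d i < D := by
    intro i hi
    have := h jm i (Ne.symm hi) hjm
    have := hD i
    omega
  set S := ∑ i : Fin N, 2 ^ (D - d i) with hS
  have hSle : S ≤ 2 ^ D := (kraft_iff d D hD).mp hdK
  have hsplit : S = 2 ^ (D - d jm) + ∑ i ∈ Finset.univ.erase jm, 2 ^ (D - d i) := by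
    rw [hS, ← Finset.add_sum_erase _ _ (Finset.mem_univ jm)]
  have heven : 2 ∣ ∑ i ∈ Finset.univ.erase jm, 2 ^ (D - d i) := by
    apply Finset.dvd_sum
    intro i hi
    have hine : i ≠ jm := (Finset.mem_erase.mp hi).1
    have : 1 ≤ D - d i := by have := huniq i hine; omega
    exact dvd_trans (dvd_of_eq (pow_one 2).symm) (pow_dvd_pow 2 this)
  have hjm1 : 2 ^ (D - d jm) = 1 := by rw [hjm]; simp
  have hodd : ¬ (2 ∣ S) := by
    rw [hsplit, hjm1]
    omega
  have hev2 : 2 ∣ 2 ^ D := dvd_pow_self 2 (by omega)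
  have hSlt : S + 1 ≤ 2 ^ D := by
    rcases lt_or_eq_of_le hSle with h' | h'
    · omega
    · exact absurd (h' ▸ hev2) hodd
  -- reduced assignment
  set d'' : Fin N → ℕ := Function.update d jm (D - 1) with hd''
  have hd''D : ∀ i, d'' i ≤ D := by
    intro i
    by_cases hi : i = jm
    · subst hi; rw [hd'', Function.update_self]; omega
    · rw [hd'', Function.update_of_ne hi]; exact hD i
  have hd''jm : d'' jm = D - 1 := Function.update_self _ _ _
  have hd''ne : ∀ i, i ≠ jm → d'' i = d i := fun i hi => Function.update_of_ne hi _ _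
  have hsum'' : (∑ i : Fin N, 2 ^ (D - d'' i)) = S + 1 := by
    rw [← Finset.add_sum_erase _ _ (Finset.mem_univ jm), hsplit, hd''jm]
    have : D - (D - 1) = 1 := by omega
    rw [this, hjm1]
    rw [Finset.sum_congr rfl (fun i hi => by
      rw [hd''ne i (Finset.mem_erase.mp hi).1])]
    ring
  have hK'' : (∑ i : Fin N, (2:ℝ) ^ (-(d'' i : ℤ))) ≤ 1 :=
    (kraft_iff d'' D hd''D).mpr (by omega)
  have hcost : (∑ i : Fin N, w i * (d'' i : ℝ)) < ∑ i : Fin N, w i * (d i : ℝ) := by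
    have e1 : (∑ i : Fin N, w i * (d'' i : ℝ))
        = w jm * ((D:ℝ) - 1) + ∑ i ∈ Finset.univ.erase jm, w i * (d i : ℝ) := by
      rw [← Finset.add_sum_erase _ _ (Finset.mem_univ jm), hd''jm]
      have : ((D - 1 : ℕ) : ℝ) = (D:ℝ) - 1 := by
        have : 1 ≤ D := hD1; push_cast [this]; ring
      rw [this]
      congr 1
      exact Finset.sum_congr rfl (fun i hi => by rw [hd''ne i (Finset.mem_erase.mp hi).1])
    have e2 : (∑ i : Fin N, w i * (d i : ℝ))
        = w jm * (D:ℝ) + ∑ i ∈ Finset.univ.erase jm, w i * (d i : ℝ) := by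
      rw [← Finset.add_sum_erase _ _ (Finset.mem_univ jm), hjm]
    rw [e1, e2]
    have := hw jm
    nlinarith
  exact absurd (hdopt d'' hK'') (not_le.mpr hcost)

/-- Exchange lemma underlying Huffman's greedy strategy: if `i₀ ≠ i₁` are two
indices of minimal weight among positive weights `w`, then among all depth
assignments satisfying the Kraft inequality there is one minimizing the
weighted path length in which `d(i₀) = d(i₁)` and this common value is the
maximum depth. -/
theorem huffman_exchange_lemma
    (N : ℕ) (hN : 2 ≤ N) (w : Fin N → ℝ) (hw : ∀ i, 0 < w i)
    (i₀ i₁ : Fin N) (hne : i₀ ≠ i₁)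
    (hmin : ∀ i : Fin N, i ≠ i₀ → i ≠ i₁ → w i₀ ≤ w i ∧ w i₁ ≤ w i) :
    ∃ d : Fin N → ℕ,
      (∑ i : Fin N, (2 : ℝ) ^ (-(d i : ℤ))) ≤ 1 ∧
      (∀ d' : Fin N → ℕ,
        (∑ i : Fin N, (2 : ℝ) ^ (-(d' i : ℤ))) ≤ 1 →
        (∑ i : Fin N, w i * (d i : ℝ)) ≤ ∑ i : Fin N, w i * (d' i : ℝ)) ∧
      d i₀ = d i₁ ∧ (∀ i : Fin N, d i ≤ d i₀) := by
  classical
  have hN0 : 0 < N := by omega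
  obtain ⟨d, hdK, hdopt⟩ := exists_optimal hN w hw
  obtain ⟨jm, _, hjm⟩ := Finset.exists_max_image Finset.univ d ⟨i₀, Finset.mem_univ _⟩
  set D := d jm with hDdef
  have hD : ∀ i, d i ≤ D := fun i => hjm i (Finset.mem_univ i)
  obtain ⟨j₀, j₁, hjne, hj₀, hj₁⟩ := two_at_max hN w hw d hdK hdopt D hD jm rfl
  by_cases h0 : d i₀ = D
  · by_cases h1 : d i₁ = D
    · exact ⟨d, hdK, hdopt, by rw [h0, h1], fun i => by rw [h0]; exact hD i⟩
    · -- i₀ at max, i₁ not: swap i₁ with a max index j ≠ i₀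
      have hex : ∃ j, j ≠ i₀ ∧ j ≠ i₁ ∧ d j = D := by
        by_cases hj₀i : j₀ = i₀
        · exact ⟨j₁, fun hh => hjne (hj₀i.trans hh.symm),
            fun hh => h1 (hh ▸ hj₁), hj₁⟩
        · exact ⟨j₀, hj₀i, fun hh => h1 (hh ▸ hj₀), hj₀⟩
      obtain ⟨j, hji₀, hji₁, hjD⟩ := hex
      have hwle : w i₁ ≤ w j := (hmin j hji₀ hji₁).2
      have hdle : d i₁ ≤ d j := by rw [hjD]; exact hD i₁
      refine ⟨fun i => d (Equiv.swap i₁ j i), ?_, ?_, ?_, ?_⟩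
      · rw [Equiv.sum_comp (Equiv.swap i₁ j) (fun i => (2:ℝ) ^ (-(d i : ℤ)))]
        exact hdK
      · intro d' hK'
        exact le_trans (swap_cost w d i₁ j hwle hdle) (hdopt d' hK')
      · beta_reduce
        rw [show Equiv.swap i₁ j i₀ = i₀ from
            Equiv.swap_apply_of_ne_of_ne hne (Ne.symm hji₀), Equiv.swap_apply_left, h0, hjD]
      · intro i
        beta_reduce
        rw [show Equiv.swap i₁ j i₀ = i₀ from
            Equiv.swap_apply_of_ne_of_ne hne (Ne.symm hji₀), h0]
        exact hD _
  · by_cases h1 : d i₁ = D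
    · -- i₁ at max, i₀ not
      have hex : ∃ j, j ≠ i₀ ∧ j ≠ i₁ ∧ d j = D := by
        by_cases hj₀i : j₀ = i₁
        · exact ⟨j₁, fun hh => h0 (hh ▸ hj₁), fun hh => hjne (hj₀i.trans hh.symm), hj₁⟩
        · exact ⟨j₀, fun hh => h0 (hh ▸ hj₀), hj₀i, hj₀⟩
      obtain ⟨j, hji₀, hji₁, hjD⟩ := hex
      have hwle : w i₀ ≤ w j := (hmin j hji₀ hji₁).1
      have hdle : d i₀ ≤ d j := by rw [hjD]; exact hD i₀
      refine ⟨fun i => d (Equiv.swap i₀ j i), ?_, ?_, ?_, ?_⟩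
      · rw [Equiv.sum_comp (Equiv.swap i₀ j) (fun i => (2:ℝ) ^ (-(d i : ℤ)))]
        exact hdK
      · intro d' hK'
        exact le_trans (swap_cost w d i₀ j hwle hdle) (hdopt d' hK')
      · beta_reduce
        rw [Equiv.swap_apply_left,
          show Equiv.swap i₀ j i₁ = i₁ from
            Equiv.swap_apply_of_ne_of_ne hne.symm (Ne.symm hji₁), hjD, h1]
      · intro i
        beta_reduce
        rw [Equiv.swap_apply_left, hjD]
        exact hD _
    · -- neither at max
      have hj₀0 : j₀ ≠ i₀ := fun hh => h0 (hh ▸ hj₀)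
      have hj₀1 : j₀ ≠ i₁ := fun hh => h1 (hh ▸ hj₀)
      have hj₁0 : j₁ ≠ i₀ := fun hh => h0 (hh ▸ hj₁)
      have hj₁1 : j₁ ≠ i₁ := fun hh => h1 (hh ▸ hj₁)
      set d1 : Fin N → ℕ := fun i => d (Equiv.swap i₀ j₀ i) with hd1
      have hd1K : (∑ i : Fin N, (2:ℝ) ^ (-(d1 i : ℤ))) ≤ 1 := by
        rw [hd1, Equiv.sum_comp (Equiv.swap i₀ j₀) (fun i => (2:ℝ) ^ (-(d i : ℤ)))]
        exact hdK
      have hd1c : (∑ i : Fin N, w i * (d1 i : ℝ)) ≤ ∑ i : Fin N, w i * (d i : ℝ) :=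
        swap_cost w d i₀ j₀ (hmin j₀ hj₀0 hj₀1).1 (by rw [hj₀]; exact hD i₀)
      have hd1i₀ : d1 i₀ = D := by rw [hd1]; simp only [Equiv.swap_apply_left]; exact hj₀
      have hd1i₁ : d1 i₁ = d i₁ := by
        rw [hd1]; beta_reduce; rw [Equiv.swap_apply_of_ne_of_ne hne.symm (Ne.symm hj₀1)]
      have hd1j₁ : d1 j₁ = D := by
        rw [hd1]; beta_reduce
        rw [Equiv.swap_apply_of_ne_of_ne hj₁0 hjne.symm]
        exact hj₁
      have hd1D : ∀ i, d1 i ≤ D := fun i => hD _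
      refine ⟨fun i => d1 (Equiv.swap i₁ j₁ i), ?_, ?_, ?_, ?_⟩
      · rw [Equiv.sum_comp (Equiv.swap i₁ j₁) (fun i => (2:ℝ) ^ (-(d1 i : ℤ)))]
        exact hd1K
      · intro d' hK'
        refine le_trans (le_trans (swap_cost w d1 i₁ j₁ (hmin j₁ hj₁0 hj₁1).2 ?_) hd1c)
          (hdopt d' hK')
        rw [hd1j₁, hd1i₁]
        exact hD i₁
      · beta_reduce
        rw [show Equiv.swap i₁ j₁ i₀ = i₀ from
            Equiv.swap_apply_of_ne_of_ne hne (Ne.symm hj₁0),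
          Equiv.swap_apply_left, hd1i₀, hd1j₁]
      · intro i
        beta_reduce
        rw [show Equiv.swap i₁ j₁ i₀ = i₀ from
            Equiv.swap_apply_of_ne_of_ne hne (Ne.symm hj₁0), hd1i₀]
        exact hd1D _
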